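/- arXiv:2604.27919 — 2 statements merged into one kernel-verified Lean document; each statement's English description precedes it below -/
import Mathlib

section
/- Let $\Phi_i, \Phi_j, \Phi_k \in [0, \pi)$ satisfy $\cos\Phi_i + \cos\Phi_j\cos\Phi_k \geq 0$, $\cos\Phi_j + \cos\Phi_k\cos\Phi_i \geq 0$, and $\cos\Phi_k + \cos\Phi_i\cos\Phi_j \geq 0$. Then $\Phi_i + \Phi_j + \Phi_k \leq \pi$, or all three inequalities $\Phi_i + \Phi_j < \pi + \Phi_k$, $\Phi_j + \Phi_k < \pi + \Phi_i$, $\Phi_k + \Phi_i < \pi + \Phi_j$ hold. -/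
open Real

lemma aux_stmt3 (a b c : ℝ) (ha : a ∈ Set.Ico 0 Real.pi)
    (hb : b ∈ Set.Ico 0 Real.pi) (hc : c ∈ Set.Ico 0 Real.pi)
    (h : Real.cos b + Real.cos c * Real.cos a ≥ 0)
    (hge : Real.pi + c ≤ a + b) : a + b + c ≤ Real.pi := by
  have hac : c < a := by linarith [hb.2]
  have ha0 : 0 < a := lt_of_le_of_lt hc.1 hac
  have hsa : 0 < Real.sin a := Real.sin_pos_of_pos_of_lt_pi ha0 ha.2
  have hsc : 0 ≤ Real.sin c := Real.sin_nonneg_of_nonneg_of_le_pi hc.1 hc.2.le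
  have hcb : Real.cos b ≤ Real.cos (Real.pi + c - a) :=
    Real.cos_le_cos_of_nonneg_of_le_pi (by linarith [ha.2, hc.1]) hb.2.le (by linarith)
  have heq : Real.cos (Real.pi + c - a) = -(Real.cos a * Real.cos c + Real.sin a * Real.sin c) := by
    rw [show Real.pi + c - a = Real.pi - (a - c) by ring, Real.cos_pi_sub, Real.cos_sub]
  rw [heq] at hcb
  have hsc0 : Real.sin c = 0 := by nlinarith
  have hc0 : c = 0 := by
    rwa [Real.sin_eq_zero_iff_of_lt_of_lt (by linarith [Real.pi_pos, hc.1]) hc.2] at hsc0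
  subst hc0
  simp only [Real.cos_zero, Real.sin_zero] at hcb h
  have hbeq : Real.cos b = Real.cos (Real.pi - a) := by
    rw [Real.cos_pi_sub]; nlinarith
  have : b = Real.pi - a :=
    Real.injOn_cos ⟨hb.1, hb.2.le⟩ ⟨by linarith [ha.2], by linarith⟩ hbeq
  linarith

theorem stmt3 (Φi Φj Φk : ℝ) (hi : Φi ∈ Set.Ico 0 Real.pi)
    (hj : Φj ∈ Set.Ico 0 Real.pi) (hk : Φk ∈ Set.Ico 0 Real.pi)
    (h1 : Real.cos Φi + Real.cos Φj * Real.cos Φk ≥ 0)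
    (h2 : Real.cos Φj + Real.cos Φk * Real.cos Φi ≥ 0)
    (h3 : Real.cos Φk + Real.cos Φi * Real.cos Φj ≥ 0) :
    Φi + Φj + Φk ≤ Real.pi ∨
      (Φi + Φj < Real.pi + Φk ∧ Φj + Φk < Real.pi + Φi ∧ Φk + Φi < Real.pi + Φj) := by
  rcases lt_or_ge (Φi + Φj) (Real.pi + Φk) with hij | hij
  · rcases lt_or_ge (Φj + Φk) (Real.pi + Φi) with hjk | hjk
    · rcases lt_or_ge (Φk + Φi) (Real.pi + Φj) with hki | hki
      · exact Or.inr ⟨hij, hjk, hki⟩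
      · exact Or.inl (by linarith [aux_stmt3 Φk Φi Φj hk hi hj h1 (by linarith)])
    · exact Or.inl (by linarith [aux_stmt3 Φj Φk Φi hj hk hi h3 (by linarith)])
  · exact Or.inl (by linarith [aux_stmt3 Φi Φj Φk hi hj hk h2 (by linarith)])
end

section
/- Let $r_i, r_j, r_k > 0$ and $\Phi_i, \Phi_j, \Phi_k \in [0, \pi)$ satisfy $\cos\Phi_s + \cos\Phi_t\cos\Phi_u \geq 0$ for all permutations $(s,t,u)$ of $(i,j,k)$. Define Euclidean edge lengths $l_k = \sqrt{r_i^2 + r_j^2 + 2r_ir_j\cos\Phi_k}$ (and cyclically). Then $l_i, l_j, l_k$ satisfy the strict triangle inequalities $l_i < l_j + l_k$, $l_j < l_k + l_i$, $l_k < l_i + l_j$. -/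
lemma tri_aux (ri rj rk a b c : ℝ)
    (hri : 0 < ri) (hrj : 0 < rj) (hrk : 0 < rk)
    (ha : -1 < a) (ha1 : a ≤ 1) (hb : -1 < b) (hb1 : b ≤ 1)
    (hc : -1 < c) (hc1 : c ≤ 1)
    (h1 : a + b * c ≥ 0) (h2 : b + c * a ≥ 0) (h3 : c + a * b ≥ 0) :
    Real.sqrt (rj ^ 2 + rk ^ 2 + 2 * rj * rk * a) <
      Real.sqrt (rk ^ 2 + ri ^ 2 + 2 * rk * ri * b) +
      Real.sqrt (ri ^ 2 + rj ^ 2 + 2 * ri * rj * c) := by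
  have hY : 0 < rk ^ 2 + ri ^ 2 + 2 * rk * ri * b := by
    nlinarith [sq_nonneg (rk - ri), mul_pos hrk hri]
  have hZ : 0 < ri ^ 2 + rj ^ 2 + 2 * ri * rj * c := by
    nlinarith [sq_nonneg (ri - rj), mul_pos hri hrj]
  have hljpos : 0 < Real.sqrt (rk ^ 2 + ri ^ 2 + 2 * rk * ri * b) := Real.sqrt_pos.mpr hY
  have hlkpos : 0 < Real.sqrt (ri ^ 2 + rj ^ 2 + 2 * ri * rj * c) := Real.sqrt_pos.mpr hZ
  rw [Real.sqrt_lt' (by linarith)]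
  have hkey : rj ^ 2 * rk ^ 2 * (1 - a ^ 2) + 2 * ri ^ 2 * rj * rk * (a + b * c) > 0 := by
    rcases ha1.lt_or_eq with h | h
    · have h1a : 0 < 1 - a ^ 2 := by nlinarith
      have hn : 0 ≤ 2 * ri ^ 2 * rj * rk * (a + b * c) := by positivity
      nlinarith [mul_pos (mul_pos (mul_pos hrj hrj) hrk) hrk]
    · subst h
      have hbc : -1 < b * c := by
        nlinarith [mul_pos (by linarith : (0:ℝ) < 1 + b) (by linarith : (0:ℝ) < 1 + c),
          mul_nonneg (by linarith : (0:ℝ) ≤ 1 - b) (by linarith : (0:ℝ) ≤ 1 - c)]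
      nlinarith [mul_pos (mul_pos (mul_pos hri hri) hrj) hrk]
  have hP : (ri ^ 2 + rk * ri * b + ri * rj * c - rj * rk * a) ^ 2 <
      (rk ^ 2 + ri ^ 2 + 2 * rk * ri * b) * (ri ^ 2 + rj ^ 2 + 2 * ri * rj * c) := by
    have t1 : 0 ≤ (ri * rj) ^ 2 * (1 - c ^ 2) :=
      mul_nonneg (sq_nonneg _) (by nlinarith : (0:ℝ) ≤ 1 - c ^ 2)
    have t2 : 0 ≤ (rk * ri) ^ 2 * (1 - b ^ 2) :=
      mul_nonneg (sq_nonneg _) (by nlinarith : (0:ℝ) ≤ 1 - b ^ 2)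
    have t3 : 0 ≤ 2 * ri * rj ^ 2 * rk * (b + c * a) := by positivity
    have t4 : 0 ≤ 2 * ri * rj * rk ^ 2 * (c + a * b) := by positivity
    have hid : (rk ^ 2 + ri ^ 2 + 2 * rk * ri * b) * (ri ^ 2 + rj ^ 2 + 2 * ri * rj * c)
        - (ri ^ 2 + rk * ri * b + ri * rj * c - rj * rk * a) ^ 2
        = (ri * rj) ^ 2 * (1 - c ^ 2) + (rk * ri) ^ 2 * (1 - b ^ 2)
          + rj ^ 2 * rk ^ 2 * (1 - a ^ 2) + 2 * ri ^ 2 * rj * rk * (a + b * c)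
          + 2 * ri * rj ^ 2 * rk * (b + c * a) + 2 * ri * rj * rk ^ 2 * (c + a * b) := by
      ring
    linarith
  have hsq : -(ri ^ 2 + rk * ri * b + ri * rj * c - rj * rk * a) <
      Real.sqrt ((rk ^ 2 + ri ^ 2 + 2 * rk * ri * b) * (ri ^ 2 + rj ^ 2 + 2 * ri * rj * c)) := by
    have h' := Real.sqrt_lt_sqrt (sq_nonneg _) hP
    rw [Real.sqrt_sq_eq_abs] at h'
    calc -(ri ^ 2 + rk * ri * b + ri * rj * c - rj * rk * a)
        ≤ |ri ^ 2 + rk * ri * b + ri * rj * c - rj * rk * a| := neg_le_abs _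
      _ < _ := h'
  have hprod : Real.sqrt (rk ^ 2 + ri ^ 2 + 2 * rk * ri * b) *
      Real.sqrt (ri ^ 2 + rj ^ 2 + 2 * ri * rj * c) =
      Real.sqrt ((rk ^ 2 + ri ^ 2 + 2 * rk * ri * b) * (ri ^ 2 + rj ^ 2 + 2 * ri * rj * c)) :=
    (Real.sqrt_mul hY.le _).symm
  have hY2 : Real.sqrt (rk ^ 2 + ri ^ 2 + 2 * rk * ri * b) ^ 2
      = rk ^ 2 + ri ^ 2 + 2 * rk * ri * b := Real.sq_sqrt hY.le
  have hZ2 : Real.sqrt (ri ^ 2 + rj ^ 2 + 2 * ri * rj * c) ^ 2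
      = ri ^ 2 + rj ^ 2 + 2 * ri * rj * c := Real.sq_sqrt hZ.le
  have hexp : (Real.sqrt (rk ^ 2 + ri ^ 2 + 2 * rk * ri * b) +
        Real.sqrt (ri ^ 2 + rj ^ 2 + 2 * ri * rj * c)) ^ 2
      = (rk ^ 2 + ri ^ 2 + 2 * rk * ri * b) + (ri ^ 2 + rj ^ 2 + 2 * ri * rj * c)
        + 2 * (Real.sqrt (rk ^ 2 + ri ^ 2 + 2 * rk * ri * b) *
            Real.sqrt (ri ^ 2 + rj ^ 2 + 2 * ri * rj * c)) := by
    have h' : (Real.sqrt (rk ^ 2 + ri ^ 2 + 2 * rk * ri * b) +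
        Real.sqrt (ri ^ 2 + rj ^ 2 + 2 * ri * rj * c)) ^ 2
        = Real.sqrt (rk ^ 2 + ri ^ 2 + 2 * rk * ri * b) ^ 2
          + 2 * (Real.sqrt (rk ^ 2 + ri ^ 2 + 2 * rk * ri * b) *
              Real.sqrt (ri ^ 2 + rj ^ 2 + 2 * ri * rj * c))
          + Real.sqrt (ri ^ 2 + rj ^ 2 + 2 * ri * rj * c) ^ 2 := by ring
    rw [h', hY2, hZ2]; ring
  rw [hexp, hprod]
  linarith [hsq]

theorem stmt5 (ri rj rk Φi Φj Φk : ℝ)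
    (hri : 0 < ri) (hrj : 0 < rj) (hrk : 0 < rk)
    (hi : Φi ∈ Set.Ico 0 Real.pi) (hj : Φj ∈ Set.Ico 0 Real.pi)
    (hk : Φk ∈ Set.Ico 0 Real.pi)
    (h1 : Real.cos Φi + Real.cos Φj * Real.cos Φk ≥ 0)
    (h2 : Real.cos Φj + Real.cos Φk * Real.cos Φi ≥ 0)
    (h3 : Real.cos Φk + Real.cos Φi * Real.cos Φj ≥ 0) :
    let li := Real.sqrt (rj ^ 2 + rk ^ 2 + 2 * rj * rk * Real.cos Φi)
    let lj := Real.sqrt (rk ^ 2 + ri ^ 2 + 2 * rk * ri * Real.cos Φj)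
    let lk := Real.sqrt (ri ^ 2 + rj ^ 2 + 2 * ri * rj * Real.cos Φk)
    li < lj + lk ∧ lj < lk + li ∧ lk < li + lj := by
  intro li lj lk
  have hlt : ∀ x : ℝ, x ∈ Set.Ico 0 Real.pi → -1 < Real.cos x := by
    intro x hx
    have := Real.cos_lt_cos_of_nonneg_of_le_pi hx.1 le_rfl hx.2
    rwa [Real.cos_pi] at this
  have hia := hlt _ hi; have hja := hlt _ hj; have hka := hlt _ hk
  have hia1 := Real.cos_le_one Φi
  have hja1 := Real.cos_le_one Φj
  have hka1 := Real.cos_le_one Φk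
  refine ⟨?_, ?_, ?_⟩
  · exact tri_aux ri rj rk _ _ _ hri hrj hrk hia hia1 hja hja1 hka hka1 h1 h2 h3
  · have := tri_aux rj rk ri (Real.cos Φj) (Real.cos Φk) (Real.cos Φi)
      hrj hrk hri hja hja1 hka hka1 hia hia1 h2 h3 h1
    exact this
  · have := tri_aux rk ri rj (Real.cos Φk) (Real.cos Φi) (Real.cos Φj)
      hrk hri hrj hka hka1 hia hia1 hja hja1 h3 h1 h2
    exact this
end
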